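/- For M(ρ̃) = (ρ̃−α)(β−ρ̃) and λ > 0, m ≠ 0, the function f(ρ̃) = ρ̃ − ρ − λ M'(ρ̃) m²/(2(λ+M(ρ̃))²) satisfies f''(ρ̃) < 0 for α < ρ̃ < (α+β)/2 and f''(ρ̃) > 0 for (α+β)/2 < ρ̃ < β. -/

import Mathlib

open Set

/-- For `M(ρ̃) = (ρ̃-α)(β-ρ̃)`, `λ > 0`, `m ≠ 0`, the function
`f(ρ̃) = ρ̃ - ρ - λ M'(ρ̃) m²/(2(λ+M(ρ̃))²)` satisfies `f'' < 0` on `(α, (α+β)/2)`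
and `f'' > 0` on `((α+β)/2, β)`. -/
theorem stmt_3 (α β lam ρ m : ℝ) (hαβ : α < β) (hlam : 0 < lam) (hm : m ≠ 0)
    (f : ℝ → ℝ)
    (hf : ∀ s, f s = s - ρ - lam * (α + β - 2 * s) * m ^ 2
      / (2 * (lam + (s - α) * (β - s)) ^ 2)) :
    (∀ s ∈ Ioo α ((α + β) / 2), deriv (deriv f) s < 0) ∧
    (∀ s ∈ Ioo ((α + β) / 2) β, 0 < deriv (deriv f) s) := by
  set c : ℝ := lam * m ^ 2 / 2 with hc
  have hcpos : 0 < c := by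
    have := pow_pos (abs_pos.mpr hm) 2
    rw [hc]
    positivity
  set w : ℝ → ℝ := fun x => lam + (x - α) * (β - x) with hwdef
  set u : ℝ → ℝ := fun x => α + β - 2 * x with hudef
  set F1 : ℝ → ℝ := fun x => 1 - c * ((-2 * w x - 2 * (u x) ^ 2) / (w x) ^ 3) with hF1
  have hwpos : ∀ s ∈ Ioo α β, 0 < w s := by
    intro s hs
    have h1 : 0 < s - α := by linarith [hs.1]
    have h2 : 0 < β - s := by linarith [hs.2]
    have := mul_pos h1 h2
    simp only [hwdef]
    nlinarith
  have hwd : ∀ s : ℝ, HasDerivAt w (u s) s := by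
    intro s
    have : HasDerivAt (fun x : ℝ => lam + (x - α) * (β - x))
        (0 + (1 * (β - s) + (s - α) * (0 - 1))) s :=
      (hasDerivAt_const s lam).add
        (((hasDerivAt_id s).sub_const α).mul ((hasDerivAt_const s β).sub (hasDerivAt_id s)))
    convert this using 1
    simp [hudef]; ring
  have hud : ∀ s : ℝ, HasDerivAt u (-2) s := by
    intro s
    have : HasDerivAt (fun x : ℝ => α + β - 2 * x) (0 - 2 * 1) s :=
      (hasDerivAt_const s (α + β)).sub ((hasDerivAt_id s).const_mul 2)
    convert this using 1
    norm_num
  -- first derivative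
  have hA : ∀ s ∈ Ioo α β, HasDerivAt f (F1 s) s := by
    intro s hs
    have hw : w s ≠ 0 := ne_of_gt (hwpos s hs)
    have hD : HasDerivAt (fun x => 2 * (w x) ^ 2) (2 * (2 * w s ^ 1 * u s)) s :=
      ((hwd s).pow 2).const_mul 2
    have hDne : 2 * (w s) ^ 2 ≠ 0 := by positivity
    have hN : HasDerivAt (fun x => lam * u x * m ^ 2) (lam * (-2) * m ^ 2) s :=
      ((hud s).const_mul lam).mul_const (m ^ 2)
    have hq : HasDerivAt (fun x => lam * u x * m ^ 2 / (2 * (w x) ^ 2))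
        ((lam * (-2) * m ^ 2 * (2 * (w s) ^ 2) - lam * u s * m ^ 2 * (2 * (2 * w s ^ 1 * u s)))
          / (2 * (w s) ^ 2) ^ 2) s := hN.div hD hDne
    have hfull : HasDerivAt (fun x => x - ρ - lam * u x * m ^ 2 / (2 * (w x) ^ 2))
        (1 - (lam * (-2) * m ^ 2 * (2 * (w s) ^ 2) - lam * u s * m ^ 2 * (2 * (2 * w s ^ 1 * u s)))
          / (2 * (w s) ^ 2) ^ 2) s := by
      exact ((hasDerivAt_id s).sub_const ρ).sub hq
    have heq : f = fun x => x - ρ - lam * u x * m ^ 2 / (2 * (w x) ^ 2) := by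
      funext x
      rw [hf x]
    rw [heq]
    convert hfull using 1
    simp only [hF1, hc]
    field_simp
  -- second derivative value
  set F2 : ℝ → ℝ := fun x => -c * (6 * u x * (2 * w x + (u x) ^ 2) / (w x) ^ 4) with hF2
  have hB : ∀ s ∈ Ioo α β, HasDerivAt F1 (F2 s) s := by
    intro s hs
    have hw : w s ≠ 0 := ne_of_gt (hwpos s hs)
    have hnum : HasDerivAt (fun x => -2 * w x - 2 * (u x) ^ 2)
        (-2 * u s - 2 * (2 * u s ^ 1 * (-2))) s :=
      ((hwd s).const_mul (-2)).sub (((hud s).pow 2).const_mul 2)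
    have hden : HasDerivAt (fun x => (w x) ^ 3) (3 * w s ^ 2 * u s) s := by
      have h : HasDerivAt (fun x => (w x) ^ 3) ((↑(3:ℕ):ℝ) * w s ^ (3 - 1) * u s) s := (hwd s).pow 3
      convert h using 1
      norm_num
    have hq : HasDerivAt (fun x => (-2 * w x - 2 * (u x) ^ 2) / (w x) ^ 3)
        (((-2 * u s - 2 * (2 * u s ^ 1 * (-2))) * (w s) ^ 3
          - (-2 * w s - 2 * (u s) ^ 2) * (3 * w s ^ 2 * u s)) / ((w s) ^ 3) ^ 2) s :=
      hnum.div hden (pow_ne_zero _ hw)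
    have hfull : HasDerivAt F1
        (0 - c * (((-2 * u s - 2 * (2 * u s ^ 1 * (-2))) * (w s) ^ 3
          - (-2 * w s - 2 * (u s) ^ 2) * (3 * w s ^ 2 * u s)) / ((w s) ^ 3) ^ 2)) s :=
      (hasDerivAt_const s 1).sub (hq.const_mul c)
    convert hfull using 1
    simp only [hF2]
    field_simp
    ring
  -- deriv (deriv f) s = F2 s on Ioo
  have hD : ∀ s ∈ Ioo α β, deriv (deriv f) s = F2 s := by
    intro s hs
    have hEv : deriv f =ᶠ[nhds s] F1 := by
      filter_upwards [isOpen_Ioo.mem_nhds hs] with x hx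
      exact (hA x hx).deriv
    rw [hEv.deriv_eq]
    exact (hB s hs).deriv
  constructor
  · intro s hs
    have hs' : s ∈ Ioo α β := ⟨hs.1, by linarith [hs.2, hαβ]⟩
    rw [hD s hs']
    have hwp := hwpos s hs'
    have hup : 0 < u s := by simp only [hudef]; linarith [hs.2]
    have : 0 < 6 * u s * (2 * w s + (u s) ^ 2) / (w s) ^ 4 := by positivity
    simp only [hF2]
    nlinarith
  · intro s hs
    have hs' : s ∈ Ioo α β := ⟨by linarith [hs.1, hαβ], hs.2⟩
    rw [hD s hs']
    have hwp := hwpos s hs'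
    have hun : u s < 0 := by simp only [hudef]; linarith [hs.1]
    have h4 : 0 < (w s) ^ 4 := by positivity
    simp only [hF2]
    have : 6 * u s * (2 * w s + (u s) ^ 2) / (w s) ^ 4 < 0 := by
      apply div_neg_of_neg_of_pos _ h4
      nlinarith
    nlinarith
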